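/- Let X := {2^{2^k} : k ∈ ℕ, k ≥ 1} ⊆ ℝ, let ρ(x,y) := |x−y| for x,y ∈ X, and let μ := Σ_{k=1}^∞ 2^k·δ_{2^{2^k}}. Then for every x ∈ X and every λ ∈ (1,∞), liminf_{r→∞} μ(B(x,λr))/μ(B(x,r)) = 1; in particular, (X,ρ,μ) does not satisfy the weak reverse doubling (WRD) condition. -/

import Mathlib

noncomputable section

open MeasureTheory Filter Set
open scoped ENNReal NNReal Topology Classical

namespace Paper

/-- The measure `μ = Σ_{k ≥ 1} 2^k δ_{2^{2^k}}` on `ℝ` (indexed below by `k+1`, `k : ℕ`). -/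
def μX : Measure ℝ :=
  Measure.sum fun k : ℕ => ((2 : ℝ≥0∞) ^ (k + 1)) • Measure.dirac ((2 : ℝ) ^ 2 ^ (k + 1))

/-- The atoms of `μX`. -/
def pX (j : ℕ) : ℝ := 2 ^ 2 ^ j

lemma pX_pos (j : ℕ) : 0 < pX j := by unfold pX; positivity

lemma two_le_pX (j : ℕ) : 2 ≤ pX j := by
  have : (2:ℝ)^1 ≤ 2 ^ 2 ^ j := pow_le_pow_right₀ (by norm_num) Nat.one_le_two_pow
  simpa [pX] using this

lemma pX_mono : StrictMono pX := fun a b h => by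
  have := pow_lt_pow_right₀ (a := (2:ℝ)) one_lt_two (Nat.pow_lt_pow_right one_lt_two h)
  simpa [pX] using this

lemma pX_succ (n : ℕ) : pX (n + 1) = pX n * pX n := by
  rw [pX, pX, pow_succ, pow_mul]; ring

lemma nat_le_pX (j : ℕ) : (j : ℝ) ≤ pX j := by
  have h1 : j ≤ 2 ^ j := (Nat.lt_two_pow_self (n := j)).le
  have h2 : (2:ℕ) ^ j ≤ 2 ^ 2 ^ j := Nat.pow_le_pow_right (by norm_num) h1
  have : (j : ℝ) ≤ ((2 ^ 2 ^ j : ℕ) : ℝ) := by exact_mod_cast h1.trans h2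
  simpa [pX] using this

lemma μX_ball (x r : ℝ) :
    μX (Metric.ball x r) =
      ∑' k : ℕ, (if pX (k+1) ∈ Metric.ball x r then ((2:ℝ≥0∞) ^ (k+1)) else 0) := by
  rw [μX, Measure.sum_apply _ measurableSet_ball]
  congr 1; funext k
  rw [Measure.smul_apply, Measure.dirac_apply' _ measurableSet_ball]
  by_cases h : pX (k+1) ∈ Metric.ball x r <;>
    · simp only [pX] at h ⊢
      simp [h, Set.indicator_apply]

lemma μX_ball_lt_top (x r : ℝ) : μX (Metric.ball x r) < ⊤ := by
  rw [μX_ball]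
  obtain ⟨N, hN⟩ : ∃ N : ℕ, x + r ≤ N := exists_nat_ge (x + r)
  have hsupp : ∀ k ∉ Finset.range N,
      (if pX (k+1) ∈ Metric.ball x r then ((2:ℝ≥0∞) ^ (k+1)) else 0) = 0 := by
    intro k hk
    rw [if_neg]
    intro hmem
    rw [Metric.mem_ball, Real.dist_eq, abs_lt] at hmem
    have hkN : N ≤ k := by simpa using hk
    have h2 : (N : ℝ) ≤ (k + 1 : ℕ) := by exact_mod_cast Nat.le_succ_of_le hkN
    have h3 : ((k + 1 : ℕ) : ℝ) ≤ pX (k+1) := nat_le_pX (k+1)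
    linarith [hmem.2]
  rw [tsum_eq_sum hsupp]
  refine ENNReal.sum_lt_top.2 fun k _ => ?_
  split <;> simp [ENNReal.pow_lt_top]

lemma μX_ball_ne_zero (K : ℕ) {r : ℝ} (hr : 0 < r) :
    μX (Metric.ball (pX (K+1)) r) ≠ 0 := by
  rw [μX_ball]
  intro h
  have h1 : (if pX (K+1) ∈ Metric.ball (pX (K+1)) r then ((2:ℝ≥0∞) ^ (K+1)) else 0)
      ≤ ∑' k : ℕ, (if pX (k+1) ∈ Metric.ball (pX (K+1)) r then ((2:ℝ≥0∞) ^ (k+1)) else 0) :=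
    ENNReal.le_tsum K
  rw [h, if_pos (Metric.mem_ball_self hr)] at h1
  simp at h1

lemma μX_ball_eq (K n : ℕ) {lam : ℝ} (hlam : 1 < lam) (hKn : K + 1 ≤ n)
    (hl : lam + 1 ≤ pX n) :
    μX (Metric.ball (pX (K+1)) (lam * pX n)) = μX (Metric.ball (pX (K+1)) (pX n)) := by
  rw [μX_ball, μX_ball]
  congr 1; funext k
  refine if_congr ?_ rfl rfl
  constructor
  · intro hmem
    rw [Metric.mem_ball, Real.dist_eq] at hmem ⊢
    by_cases hkn : k + 1 ≤ n
    · have h1 : pX (k+1) ≤ pX n := pX_mono.monotone hkn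
      have h2 : pX (K+1) ≤ pX n := pX_mono.monotone hKn
      have h3 := two_le_pX (k+1)
      have h4 := two_le_pX (K+1)
      rw [abs_lt]
      constructor <;> linarith
    · exfalso
      push_neg at hkn
      have h1 : pX (n+1) ≤ pX (k+1) := pX_mono.monotone hkn
      have h2 : pX (K+1) ≤ pX n := pX_mono.monotone hKn
      have h3 := pX_succ n
      have h4 := pX_pos n
      have h5 : pX (k+1) - pX (K+1) ≤ |pX (k+1) - pX (K+1)| := le_abs_self _
      nlinarith
  · intro hmem
    have hle : pX n ≤ lam * pX n := le_mul_of_one_le_left (pX_pos n).le hlam.le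
    exact Metric.ball_subset_ball hle hmem

theorem statement9 :
    (∀ (k : ℕ) (lam : ℝ), 1 < lam →
      liminf (fun r : ℝ =>
          μX (Metric.ball ((2 : ℝ) ^ 2 ^ (k + 1)) (lam * r)) /
            μX (Metric.ball ((2 : ℝ) ^ 2 ^ (k + 1)) r)) atTop = 1) ∧
    ¬ ∃ (k : ℕ) (lam C : ℝ), 1 < lam ∧ 1 < C ∧
        ENNReal.ofReal C ≤
          liminf (fun r : ℝ =>
            μX (Metric.ball ((2 : ℝ) ^ 2 ^ (k + 1)) (lam * r)) /
              μX (Metric.ball ((2 : ℝ) ^ 2 ^ (k + 1)) r)) atTop := by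
  have main : ∀ (k : ℕ) (lam : ℝ), 1 < lam →
      liminf (fun r : ℝ =>
          μX (Metric.ball ((2 : ℝ) ^ 2 ^ (k + 1)) (lam * r)) /
            μX (Metric.ball ((2 : ℝ) ^ 2 ^ (k + 1)) r)) atTop = 1 := by
    intro K lam hlam
    have hx : (2 : ℝ) ^ 2 ^ (K + 1) = pX (K+1) := rfl
    rw [hx]
    apply le_antisymm
    · -- liminf ≤ 1, via frequently
      refine Filter.liminf_le_of_frequently_le ?_ (by isBoundedDefault)
      rw [Filter.frequently_atTop]
      intro a
      set n : ℕ := max (K + 1) (max ⌈a⌉₊ ⌈lam + 1⌉₊) with hn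
      have hKn : K + 1 ≤ n := le_max_left _ _
      have hna : a ≤ pX n := by
        have h1 : a ≤ (⌈a⌉₊ : ℝ) := Nat.le_ceil a
        have h2 : (⌈a⌉₊ : ℝ) ≤ (n : ℝ) := by
          exact_mod_cast (le_max_left _ _).trans (le_max_right (K+1) _)
        linarith [nat_le_pX n]
      have hnl : lam + 1 ≤ pX n := by
        have h1 : lam + 1 ≤ (⌈lam + 1⌉₊ : ℝ) := Nat.le_ceil _
        have h2 : (⌈lam + 1⌉₊ : ℝ) ≤ (n : ℝ) := by
          exact_mod_cast (le_max_right ⌈a⌉₊ _).trans (le_max_right (K+1) _)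
        linarith [nat_le_pX n]
      refine ⟨pX n, hna, ?_⟩
      have heq := μX_ball_eq K n hlam hKn hnl
      have hne0 : μX (Metric.ball (pX (K+1)) (pX n)) ≠ 0 :=
        μX_ball_ne_zero K (pX_pos n)
      have hnetop : μX (Metric.ball (pX (K+1)) (pX n)) ≠ ⊤ :=
        (μX_ball_lt_top _ _).ne
      simp only [heq]
      rw [ENNReal.div_self hne0 hnetop]
    · -- 1 ≤ liminf, since eventually the ratio is ≥ 1
      refine Filter.le_liminf_of_le (by isBoundedDefault) ?_
      filter_upwards [Filter.eventually_ge_atTop (1 : ℝ)] with r hr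
      have hr0 : (0 : ℝ) < r := by linarith
      have hne0 : μX (Metric.ball (pX (K+1)) r) ≠ 0 := μX_ball_ne_zero K hr0
      have hnetop : μX (Metric.ball (pX (K+1)) r) ≠ ⊤ := (μX_ball_lt_top _ _).ne
      have hmono : μX (Metric.ball (pX (K+1)) r) ≤ μX (Metric.ball (pX (K+1)) (lam * r)) :=
        measure_mono (Metric.ball_subset_ball (le_mul_of_one_le_left hr0.le hlam.le))
      calc (1 : ℝ≥0∞) = μX (Metric.ball (pX (K+1)) r) / μX (Metric.ball (pX (K+1)) r) :=
            (ENNReal.div_self hne0 hnetop).symm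
        _ ≤ μX (Metric.ball (pX (K+1)) (lam * r)) / μX (Metric.ball (pX (K+1)) r) :=
            ENNReal.div_le_div_right hmono _
  refine ⟨main, ?_⟩
  rintro ⟨k, lam, C, hlam, hC, hle⟩
  rw [main k lam hlam] at hle
  exact absurd (ENNReal.ofReal_le_one.1 hle) (by linarith)

end Paper
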